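/- Let F be a field of characteristic not 2 and a, b ∈ F with ab(a−b) ≠ 0. Let (x₁, y₁) be an affine point on the curve x(ay² − 1) = y(bx² − 1) with (bx₁² + 1)(ay₁² − 1)(bx₁² − 1)(ay₁² + 1) ≠ 0. Then the doubling point (x₃, y₃) with x₃ = 2x₁(ay₁² + 1)/((bx₁² + 1)(ay₁² − 1)) and y₃ = 2y₁(bx₁² + 1)/((bx₁² − 1)(ay₁² + 1)) lies on the curve x(ay² − 1) = y(bx² − 1). -/

import Mathlib

/-- Closure of the affine doubling formula on the generalized Huff curve
`x(ay² − 1) = y(bx² − 1)`. -/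
theorem huff_affine_double_closure {F : Type*} [Field F] (a b : F)
    (h2 : (2 : F) ≠ 0) (ha : a ≠ 0) (hb : b ≠ 0) (hab : a ≠ b)
    (x₁ y₁ : F)
    (h₁ : x₁ * (a * y₁ ^ 2 - 1) = y₁ * (b * x₁ ^ 2 - 1))
    (hden : (b * x₁ ^ 2 + 1) * (a * y₁ ^ 2 - 1) * (b * x₁ ^ 2 - 1) * (a * y₁ ^ 2 + 1) ≠ 0)
    (x₃ y₃ : F)
    (hx₃ : x₃ = 2 * x₁ * (a * y₁ ^ 2 + 1) / ((b * x₁ ^ 2 + 1) * (a * y₁ ^ 2 - 1)))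
    (hy₃ : y₃ = 2 * y₁ * (b * x₁ ^ 2 + 1) / ((b * x₁ ^ 2 - 1) * (a * y₁ ^ 2 + 1))) :
    x₃ * (a * y₃ ^ 2 - 1) = y₃ * (b * x₃ ^ 2 - 1) := by
  have hD : a * y₁ ^ 2 + 1 ≠ 0 := fun h => hden (by rw [h]; ring)
  have hC : b * x₁ ^ 2 - 1 ≠ 0 := fun h => hden (by rw [h]; ring)
  have hB : a * y₁ ^ 2 - 1 ≠ 0 := fun h => hden (by rw [h]; ring)
  have hA : b * x₁ ^ 2 + 1 ≠ 0 := fun h => hden (by rw [h]; ring)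
  subst hx₃ hy₃
  have hC' : x₁ ^ 2 * b - 1 ≠ 0 := by rwa [mul_comm]
  have hA' : x₁ ^ 2 * b + 1 ≠ 0 := by rwa [mul_comm]
  field_simp
  linear_combination (4*a*y₁^2*(b*x₁^2+1)^2 - (a*y₁^2+1)^2*(b*x₁^2-1)^2) * h₁
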